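/- The kernel of the homomorphism Θ: S₄ → GL(3,ℤ) (defined by Θ(σ₁)=Θ(σ₃)=[[-1,0,0],[0,0,-1],[0,-1,0]], Θ(σ₂)=[[0,0,-1],[0,-1,0],[-1,0,0]]) is the Klein four-group {id, (12)(34), (13)(24), (14)(23)}, generated by (12)(34) and (13)(24). -/

import Mathlib

theorem stmt2 (Θ : Equiv.Perm (Fin 4) →* GL (Fin 3) ℤ)
    (h1 : (Θ (Equiv.swap 0 1) : Matrix (Fin 3) (Fin 3) ℤ)
        = !![-1, 0, 0; 0, 0, -1; 0, -1, 0])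
    (h3 : (Θ (Equiv.swap 2 3) : Matrix (Fin 3) (Fin 3) ℤ)
        = !![-1, 0, 0; 0, 0, -1; 0, -1, 0])
    (h2 : (Θ (Equiv.swap 1 2) : Matrix (Fin 3) (Fin 3) ℤ)
        = !![0, 0, -1; 0, -1, 0; -1, 0, 0]) :
    (Θ.ker : Set (Equiv.Perm (Fin 4)))
        = {1, Equiv.swap 0 1 * Equiv.swap 2 3,
            Equiv.swap 0 2 * Equiv.swap 1 3,
            Equiv.swap 0 3 * Equiv.swap 1 2} ∧
    Θ.ker = Subgroup.closure
        {Equiv.swap 0 1 * Equiv.swap 2 3, Equiv.swap 0 2 * Equiv.swap 1 3} := by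
  have hone : (1 : Matrix (Fin 3) (Fin 3) ℤ) = !![1,0,0;0,1,0;0,0,1] := Matrix.one_fin_three
  set s1 : Equiv.Perm (Fin 4) := Equiv.swap 0 1 with hs1
  set s2 : Equiv.Perm (Fin 4) := Equiv.swap 1 2 with hs2
  set s3 : Equiv.Perm (Fin 4) := Equiv.swap 2 3 with hs3
  set x : Equiv.Perm (Fin 4) := Equiv.swap 0 1 * Equiv.swap 2 3 with hxdef
  set y : Equiv.Perm (Fin 4) := Equiv.swap 0 2 * Equiv.swap 1 3 with hydef
  set z : Equiv.Perm (Fin 4) := Equiv.swap 0 3 * Equiv.swap 1 2 with hzdef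
  -- kernel membership of x, y, z
  have hx : x ∈ Θ.ker := by
    rw [MonoidHom.mem_ker]
    apply Units.ext
    rw [hxdef, ← hs1, ← hs3, map_mul, Units.val_mul, h1, h3, Units.val_one, hone]
    norm_num [Matrix.mul_fin_three]
  have hyw : y = s2 * s1 * s2 * s3 * s2 * s3 := by rw [hydef, hs1, hs2, hs3]; decide
  have hy : y ∈ Θ.ker := by
    rw [MonoidHom.mem_ker]
    apply Units.ext
    rw [hyw]
    simp only [map_mul, Units.val_mul, h1, h2, h3]
    rw [Units.val_one, hone]
    norm_num [Matrix.mul_fin_three]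
  have hzxy : z = x * y := by rw [hzdef, hxdef, hydef]; decide
  have hz : z ∈ Θ.ker := by rw [hzxy]; exact mul_mem hx hy
  -- the six distinct images give a lower bound on the range
  have hfin : Finite Θ.range := Finite.of_surjective _ Θ.rangeRestrict_surjective
  set a : GL (Fin 3) ℤ := Θ s1 with hadef
  set b : GL (Fin 3) ℤ := Θ s2 with hbdef
  have hvab : ((a*b : GL (Fin 3) ℤ) : Matrix (Fin 3) (Fin 3) ℤ) = !![0,0,1;1,0,0;0,1,0] := by
    rw [Units.val_mul, hadef, hbdef, hs1, hs2, h1, h2]; norm_num [Matrix.mul_fin_three]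
  have hvba : ((b*a : GL (Fin 3) ℤ) : Matrix (Fin 3) (Fin 3) ℤ) = !![0,1,0;0,0,1;1,0,0] := by
    rw [Units.val_mul, hadef, hbdef, hs1, hs2, h1, h2]; norm_num [Matrix.mul_fin_three]
  have hvaba : ((a*b*a : GL (Fin 3) ℤ) : Matrix (Fin 3) (Fin 3) ℤ) = !![0,-1,0;-1,0,0;0,0,-1] := by
    rw [Units.val_mul, hvab, hadef, hs1, h1]; norm_num [Matrix.mul_fin_three]
  set mv : Fin 6 → Matrix (Fin 3) (Fin 3) ℤ :=
    ![!![1,0,0;0,1,0;0,0,1], !![-1,0,0;0,0,-1;0,-1,0], !![0,0,-1;0,-1,0;-1,0,0],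
      !![0,0,1;1,0,0;0,1,0], !![0,1,0;0,0,1;1,0,0], !![0,-1,0;-1,0,0;0,0,-1]] with hmv
  have hmvinj : Function.Injective mv := by rw [hmv]; decide
  set f : Fin 6 → Θ.range :=
    ![⟨1, one_mem _⟩, ⟨a, ⟨s1, rfl⟩⟩, ⟨b, ⟨s2, rfl⟩⟩,
      ⟨a*b, mul_mem ⟨s1, rfl⟩ ⟨s2, rfl⟩⟩, ⟨b*a, mul_mem ⟨s2, rfl⟩ ⟨s1, rfl⟩⟩,
      ⟨a*b*a, mul_mem (mul_mem ⟨s1, rfl⟩ ⟨s2, rfl⟩) ⟨s1, rfl⟩⟩] with hf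
  have hkey : ∀ i, (((f i : GL (Fin 3) ℤ)) : Matrix (Fin 3) (Fin 3) ℤ) = mv i := by
    intro i
    fin_cases i
    · show ((1 : GL (Fin 3) ℤ) : Matrix (Fin 3) (Fin 3) ℤ) = !![1,0,0;0,1,0;0,0,1]
      rw [Units.val_one]; exact hone
    · show ((a : GL (Fin 3) ℤ) : Matrix (Fin 3) (Fin 3) ℤ) = !![-1,0,0;0,0,-1;0,-1,0]
      exact h1
    · show ((b : GL (Fin 3) ℤ) : Matrix (Fin 3) (Fin 3) ℤ) = !![0,0,-1;0,-1,0;-1,0,0]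
      exact h2
    · show ((a*b : GL (Fin 3) ℤ) : Matrix (Fin 3) (Fin 3) ℤ) = !![0,0,1;1,0,0;0,1,0]
      exact hvab
    · show ((b*a : GL (Fin 3) ℤ) : Matrix (Fin 3) (Fin 3) ℤ) = !![0,1,0;0,0,1;1,0,0]
      exact hvba
    · show ((a*b*a : GL (Fin 3) ℤ) : Matrix (Fin 3) (Fin 3) ℤ) = !![0,-1,0;-1,0,0;0,0,-1]
      exact hvaba
  have hfinj : Function.Injective f := by
    intro i j hij
    apply hmvinj
    rw [← hkey i, ← hkey j, hij]
  have h6 : 6 ≤ Nat.card Θ.range := by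
    have := Nat.card_le_card_of_injective f hfinj
    simpa using this
  -- counting
  have hcard : Nat.card (Equiv.Perm (Fin 4))
      = Nat.card (Equiv.Perm (Fin 4) ⧸ Θ.ker) * Nat.card Θ.ker :=
    Subgroup.card_eq_card_quotient_mul_card_subgroup _
  have hq : Nat.card (Equiv.Perm (Fin 4) ⧸ Θ.ker) = Nat.card Θ.range :=
    Nat.card_congr (QuotientGroup.quotientKerEquivRange Θ).toEquiv
  have h24 : Nat.card (Equiv.Perm (Fin 4)) = 24 := by
    rw [Nat.card_eq_fintype_card, Fintype.card_perm, Fintype.card_fin]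
    rfl
  have hk4 : Nat.card Θ.ker ≤ 4 := by
    have h1' : 6 * Nat.card Θ.ker ≤ Nat.card (Equiv.Perm (Fin 4) ⧸ Θ.ker) * Nat.card Θ.ker :=
      Nat.mul_le_mul_right _ (hq ▸ h6)
    rw [← hcard, h24] at h1'
    omega
  -- the set equality
  have hsub : ({1, x, y, z} : Set (Equiv.Perm (Fin 4))) ⊆ (Θ.ker : Set (Equiv.Perm (Fin 4))) := by
    rintro g (rfl | rfl | rfl | rfl)
    · exact one_mem _
    · exact hx
    · exact hy
    · exact hz
  have hS4 : ({1, x, y, z} : Set (Equiv.Perm (Fin 4))).ncard = 4 := by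
    have : ({1, x, y, z} : Set (Equiv.Perm (Fin 4)))
        = (({1, x, y, z} : Finset (Equiv.Perm (Fin 4))) : Set (Equiv.Perm (Fin 4))) := by
      simp
    rw [this, Set.ncard_coe_finset, hxdef, hydef, hzdef]
    decide
  have hkle : ((Θ.ker : Set (Equiv.Perm (Fin 4)))).ncard ≤ ({1, x, y, z} : Set _).ncard := by
    rw [hS4, ← Nat.card_coe_set_eq]
    exact hk4
  have hS : (Θ.ker : Set (Equiv.Perm (Fin 4))) = {1, x, y, z} :=
    (Set.eq_of_subset_of_ncard_le hsub hkle).symm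
  refine ⟨hS, ?_⟩
  apply le_antisymm
  · intro g hg
    have : g ∈ ({1, x, y, z} : Set (Equiv.Perm (Fin 4))) := hS ▸ hg
    rcases this with rfl | rfl | rfl | rfl
    · exact one_mem _
    · exact Subgroup.subset_closure (Set.mem_insert _ _)
    · exact Subgroup.subset_closure (Set.mem_insert_of_mem _ rfl)
    · rw [hzxy]
      exact mul_mem (Subgroup.subset_closure (Set.mem_insert _ _))
        (Subgroup.subset_closure (Set.mem_insert_of_mem _ rfl))
  · rw [Subgroup.closure_le]
    rintro g (rfl | rfl)
    · exact hx
    · exact hy
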